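/- Let {a_t}_{t∈ℕ} and {b_t}_{t∈ℕ} be integrable real-valued random variables adapted to a filtration {F_t}, such that almost surely for all t: 0 ≤ b_t ≤ a_t − E[a_{t+1} | F_t], and a_t ≥ a* for some constant a* ∈ ℝ. Then b_t → 0 almost surely. -/

import Mathlib

open MeasureTheory Filter
open scoped NNReal ENNReal

private lemma conv_aux {Ω : Type*} {m0 : MeasurableSpace Ω} {μ : Measure Ω}
    [IsProbabilityMeasure μ] {ℱ : Filtration ℕ m0} {f : ℕ → Ω → ℝ} {c : ℝ}
    (hf : Supermartingale f ℱ μ) (hb : ∀ n, ∀ᵐ ω ∂μ, c ≤ f n ω) :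
    ∀ᵐ ω ∂μ, ∃ l, Tendsto (fun n => f n ω) atTop (nhds l) := by
  have hint : ∀ n, Integrable (f n) μ := hf.integrable
  have hmean : ∀ n, ∫ ω, f n ω ∂μ ≤ ∫ ω, f 0 ω ∂μ := by
    intro n
    calc ∫ ω, f n ω ∂μ = ∫ ω, (μ[f n|ℱ 0]) ω ∂μ := (integral_condExp (ℱ.le 0)).symm
      _ ≤ ∫ ω, f 0 ω ∂μ :=
        integral_mono_ae integrable_condExp (hint 0) (hf.2.1 0 n (Nat.zero_le n))
  set R : ℝ≥0 := (∫ ω, f 0 ω ∂μ - c + |c|).toNNReal with hR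
  have hsnorm : ∀ n, eLpNorm (f n) 1 μ ≤ R := by
    intro n
    rw [eLpNorm_one_eq_lintegral_enorm, ← ofReal_integral_norm_eq_lintegral_enorm (hint n)]
    have h1 : ∫ ω, ‖f n ω‖ ∂μ ≤ ∫ ω, (f n ω - c + |c|) ∂μ := by
      apply integral_mono_ae (hint n).norm
        (((hint n).sub (integrable_const c)).add (integrable_const |c|))
      filter_upwards [hb n] with ω hω
      calc ‖f n ω‖ = |(f n ω - c) + c| := by rw [Real.norm_eq_abs]; ring_nf
        _ ≤ |f n ω - c| + |c| := abs_add_le _ _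
        _ = f n ω - c + |c| := by rw [abs_of_nonneg (sub_nonneg.2 hω)]
    have h2 : ∫ ω, (f n ω - c + |c|) ∂μ = ∫ ω, f n ω ∂μ - c + |c| := by
      have he : (fun ω => f n ω - c + |c|) = fun ω => f n ω + (|c| - c) := by
        funext ω; ring
      rw [he, integral_add (hint n) (integrable_const _), integral_const]
      simp [measure_univ]; ring
    have h3 : ∫ ω, ‖f n ω‖ ∂μ ≤ ∫ ω, f 0 ω ∂μ - c + |c| := by
      rw [h2] at h1
      linarith [hmean n]
    calc ENNReal.ofReal (∫ ω, ‖f n ω‖ ∂μ) ≤ ENNReal.ofReal (∫ ω, f 0 ω ∂μ - c + |c|) :=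
        ENNReal.ofReal_le_ofReal h3
      _ = (R : ℝ≥0∞) := by rw [hR, ENNReal.ofReal]
  have hneg : ∀ n, eLpNorm ((-f) n) 1 μ ≤ R := by
    intro n
    simpa [eLpNorm_neg] using hsnorm n
  filter_upwards [hf.neg.exists_ae_tendsto_of_bdd hneg] with ω ⟨l, hl⟩
  refine ⟨-l, ?_⟩
  have := hl.neg
  simpa using this

theorem stmt4 {Ω : Type*} {m0 : MeasurableSpace Ω} {μ : Measure Ω} [IsProbabilityMeasure μ]
    (ℱ : Filtration ℕ m0) (a b : ℕ → Ω → ℝ)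
    (ha_adapted : Adapted ℱ a) (hb_adapted : Adapted ℱ b)
    (ha_int : ∀ t, Integrable (a t) μ) (hb_int : ∀ t, Integrable (b t) μ)
    (astar : ℝ)
    (h : ∀ t, ∀ᵐ ω ∂μ,
      0 ≤ b t ω ∧ b t ω ≤ a t ω - (μ[a (t + 1) | ℱ t]) ω ∧ astar ≤ a t ω) :
    ∀ᵐ ω ∂μ, Tendsto (fun t => b t ω) atTop (nhds 0) := by
  have hae : ∀ᵐ ω ∂μ, ∀ t, 0 ≤ b t ω ∧ b t ω ≤ a t ω - (μ[a (t + 1) | ℱ t]) ω ∧ astar ≤ a t ω :=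
    ae_all_iff.2 h
  set S : ℕ → Ω → ℝ := fun t ω => ∑ s ∈ Finset.range t, b s ω with hSdef
  set M : ℕ → Ω → ℝ := fun t ω => a t ω + S t ω with hMdef
  have hS_int : ∀ t, Integrable (S t) μ := fun t =>
    integrable_finset_sum _ fun s _ => hb_int s
  have hM_int : ∀ t, Integrable (M t) μ := fun t => (ha_int t).add (hS_int t)
  have hS_meas : ∀ t, StronglyMeasurable[ℱ t] (S t) := fun t =>
    Finset.stronglyMeasurable_fun_sum _ fun s hs =>
      ((hb_adapted s).mono (ℱ.mono (Finset.mem_range_le hs)) le_rfl).stronglyMeasurable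
  -- a is a supermartingale
  have ha_sup : Supermartingale a ℱ μ := by
    refine supermartingale_nat ha_adapted.stronglyAdapted ha_int fun t => ?_
    filter_upwards [h t] with ω hω
    linarith [hω.1, hω.2.1]
  -- M is a supermartingale
  have hM_sup : Supermartingale M ℱ μ := by
    refine supermartingale_nat (fun t => ((ha_adapted t).add (hS_meas t).measurable).stronglyMeasurable) hM_int fun t => ?_
    have hce : μ[M (t + 1)|ℱ t] =ᵐ[μ]
        fun ω => (μ[a (t + 1)|ℱ t]) ω + S (t + 1) ω := by
      have := condExp_add (μ := μ) (m := ℱ t) (ha_int (t + 1)) (hS_int (t + 1))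
      refine this.trans ?_
      have hm : StronglyMeasurable[ℱ t] (S (t + 1)) :=
        Finset.stronglyMeasurable_fun_sum _ fun s hs =>
          ((hb_adapted s).mono (ℱ.mono (Nat.lt_succ_iff.1 (Finset.mem_range.1 hs))) le_rfl).stronglyMeasurable
      rw [condExp_of_stronglyMeasurable (ℱ.le t) hm (hS_int (t + 1))]
      exact EventuallyEq.rfl
    filter_upwards [hce, h t] with ω hω h2
    rw [hω]
    have hSsucc : S (t + 1) ω = S t ω + b t ω := Finset.sum_range_succ _ _
    simp only [hMdef]
    rw [hSsucc]
    linarith [h2.2.1]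
  -- lower bounds
  have ha_lb : ∀ n, ∀ᵐ ω ∂μ, astar ≤ a n ω := fun n => by
    filter_upwards [h n] with ω hω using hω.2.2
  have hM_lb : ∀ n, ∀ᵐ ω ∂μ, astar ≤ M n ω := fun n => by
    filter_upwards [hae] with ω hω
    have hSnn : 0 ≤ S n ω := Finset.sum_nonneg fun s _ => (hω s).1
    have := (hω n).2.2
    simp only [hMdef]
    linarith
  filter_upwards [conv_aux ha_sup ha_lb, conv_aux hM_sup hM_lb, hae] with ω ⟨la, hla⟩ ⟨lM, hlM⟩ hω
  have hStend : Tendsto (fun n => S n ω) atTop (nhds (lM - la)) := by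
    have : (fun n => S n ω) = fun n => M n ω - a n ω := by
      funext n; simp [hMdef]
    rw [this]
    exact hlM.sub hla
  have hb_eq : (fun t => b t ω) = fun t => S (t + 1) ω - S t ω := by
    funext t; simp [hSdef, Finset.sum_range_succ]
  rw [hb_eq]
  have hshift : Tendsto (fun t => S (t + 1) ω) atTop (nhds (lM - la)) :=
    hStend.comp (tendsto_add_atTop_nat 1)
  simpa using hshift.sub hStend
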